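/- Let X be a real random variable with values in a compact interval [m, M], with CDF F_X and left-continuous quantile function q_X(u) = inf{x : F_X(x) ≥ u}, and set H(p) = ∫₀^p q_X(u) du for p ∈ [0,1]. Then for every z ∈ ℝ, ∫_m^z F_X(x) dx = sup_{p ∈ [0,1]} ( z·p − H(p) ); that is, the integrated CDF of X is the convex conjugate (restricted to [0,1]) of the cumulative quantile function H. -/

import Mathlib

open MeasureTheory

/-- The integrated CDF of a compactly supported random variable is the
convex conjugate (restricted to `[0,1]`) of the cumulative quantile function. -/
theorem integrated_cdf_eq_conjugate_of_cumulative_quantile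
    {Ω : Type*} [MeasurableSpace Ω] (P : Measure Ω) [IsProbabilityMeasure P]
    (m M : ℝ) (X : Ω → ℝ) (hX : Measurable X) (hrange : ∀ ω, X ω ∈ Set.Icc m M)
    (Fx : ℝ → ℝ) (hFx : ∀ x, Fx x = (P {ω | X ω ≤ x}).toReal)
    (qX : ℝ → ℝ) (hqX : ∀ u, qX u = sInf {x : ℝ | u ≤ Fx x})
    (H : ℝ → ℝ) (hH : ∀ p, H p = ∫ u in (0:ℝ)..p, qX u) :
    ∀ z : ℝ, ∫ x in m..z, Fx x = sSup ((fun p => z * p - H p) '' Set.Icc (0:ℝ) 1) := by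
  intro z
  -- Ω is nonempty, hence m ≤ M
  have hmM : m ≤ M := by
    by_contra h
    have h1 : P Set.univ = 1 := measure_univ
    have h2 : (Set.univ : Set Ω) = ∅ := by
      rw [Set.eq_empty_iff_forall_notMem]
      intro ω _
      exact h ((hrange ω).1.trans (hrange ω).2)
    rw [h2, measure_empty] at h1
    exact one_ne_zero h1.symm
  -- basic facts about Fx
  have hFmono : Monotone Fx := by
    intro x y hxy
    rw [hFx, hFx]
    exact ENNReal.toReal_le_toReal (measure_ne_top P _) (measure_ne_top P _) |>.mpr
      (measure_mono fun ω hω => le_trans hω hxy)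
  have hF0 : ∀ x, x < m → Fx x = 0 := by
    intro x hx
    rw [hFx]
    have : {ω | X ω ≤ x} = ∅ := by
      rw [Set.eq_empty_iff_forall_notMem]
      intro ω hω
      exact absurd (le_trans (hrange ω).1 hω) (not_le.mpr hx)
    rw [this, measure_empty, ENNReal.toReal_zero]
  have hF1 : ∀ x, M ≤ x → Fx x = 1 := by
    intro x hx
    rw [hFx]
    have : {ω | X ω ≤ x} = Set.univ := by
      rw [Set.eq_univ_iff_forall]
      exact fun ω => le_trans (hrange ω).2 hx
    rw [this, measure_univ, ENNReal.toReal_one]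
  have hFnn : ∀ x, 0 ≤ Fx x := fun x => by rw [hFx]; exact ENNReal.toReal_nonneg
  have hFle1 : ∀ x, Fx x ≤ 1 := fun x =>
    (hFmono (le_max_left x M)).trans (le_of_eq (hF1 _ (le_max_right x M)))
  -- right continuity of Fx (in the form we need)
  have hFright : ∀ (a u : ℝ), (∀ n : ℕ, u ≤ Fx (a + 1 / (n + 1))) → u ≤ Fx a := by
    intro a u hn
    set s : ℕ → Set Ω := fun n => {ω | X ω ≤ a + 1 / (n + 1)} with hs
    have hmeas : ∀ n, NullMeasurableSet (s n) P := fun n =>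
      (hX measurableSet_Iic).nullMeasurableSet
    have hanti : Antitone s := by
      intro i j hij ω hω
      have h1 : (1 : ℝ) / (j + 1) ≤ 1 / (i + 1) :=
        one_div_le_one_div_of_le (by positivity)
          (by exact_mod_cast add_le_add_left (Nat.cast_le.mpr hij) 1)
      simp only [hs, Set.mem_setOf_eq] at hω ⊢
      linarith
    have htend0 : Filter.Tendsto (fun n : ℕ => a + 1 / ((n : ℝ) + 1)) Filter.atTop (nhds a) := by
      have := Filter.Tendsto.const_add a tendsto_one_div_add_atTop_nhds_zero_nat
      simpa using this
    have hiInter : (⋂ n, s n) = {ω | X ω ≤ a} := by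
      ext ω
      simp only [Set.mem_iInter, Set.mem_setOf_eq, hs]
      constructor
      · intro h
        exact ge_of_tendsto' htend0 fun n => h n
      · intro h n
        have : (0:ℝ) < 1 / ((n:ℝ) + 1) := by positivity
        linarith
    have htm := tendsto_measure_iInter_atTop hmeas hanti ⟨0, measure_ne_top P _⟩
    rw [hiInter] at htm
    have htr : Filter.Tendsto (fun n : ℕ => Fx (a + 1 / (n + 1))) Filter.atTop (nhds (Fx a)) := by
      have := (ENNReal.tendsto_toReal (measure_ne_top P {ω | X ω ≤ a})).comp htm
      convert this using 2 with n
      · rw [hFx]; rfl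
      · rw [hFx]
    exact ge_of_tendsto' htr hn
  -- the set defining the quantile
  have hSlb : ∀ u : ℝ, 0 < u → ∀ y ∈ {x | u ≤ Fx x}, m ≤ y := by
    intro u hu y hy
    by_contra h
    push_neg at h
    rw [Set.mem_setOf_eq, hF0 y h] at hy
    exact absurd (lt_of_lt_of_le hu hy) (lt_irrefl 0)
  have hSbdd : ∀ u : ℝ, 0 < u → BddBelow {x | u ≤ Fx x} := fun u hu => ⟨m, hSlb u hu⟩
  have hSne : ∀ u : ℝ, u ≤ 1 → ({x | u ≤ Fx x}).Nonempty := by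
    intro u hu
    exact ⟨M, by rw [Set.mem_setOf_eq, hF1 M le_rfl]; exact hu⟩
  have hql : ∀ u : ℝ, 0 < u → u ≤ 1 → m ≤ qX u := by
    intro u hu0 hu1
    rw [hqX]
    exact le_csInf (hSne u hu1) fun y hy => hSlb u hu0 y hy
  have hqu : ∀ u : ℝ, 0 < u → u ≤ 1 → qX u ≤ M := by
    intro u hu0 hu1
    rw [hqX]
    exact csInf_le (hSbdd u hu0) (by rw [Set.mem_setOf_eq, hF1 M le_rfl]; exact hu1)
  -- Galois connection
  have galois : ∀ u x : ℝ, 0 < u → u ≤ 1 → (qX u ≤ x ↔ u ≤ Fx x) := by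
    intro u x hu0 hu1
    constructor
    · intro h
      have key : u ≤ Fx (qX u) := by
        apply hFright
        intro n
        have hlt : sInf {y | u ≤ Fx y} < qX u + 1 / (n + 1) := by
          rw [← hqX]
          have : (0:ℝ) < 1 / ((n:ℝ) + 1) := by positivity
          linarith
        obtain ⟨y, hy, hylt⟩ := exists_lt_of_csInf_lt (hSne u hu1) hlt
        exact le_trans hy (hFmono hylt.le)
      exact key.trans (hFmono h)
    · intro h
      rw [hqX]
      exact csInf_le (hSbdd u hu0) h
  -- globally monotone extension of qX
  set qm : ℝ → ℝ := fun u => if u ≤ 0 then m else qX (min u 1) with hqm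
  have hqm_eq : ∀ u ∈ Set.Ioc (0:ℝ) 1, qm u = qX u := by
    intro u hu
    rw [hqm]
    simp only [if_neg (not_le.mpr hu.1), min_eq_left hu.2]
  have hqm_range : ∀ u, m ≤ qm u ∧ qm u ≤ M := by
    intro u
    rw [hqm]
    by_cases h : u ≤ 0
    · simp only [if_pos h]; exact ⟨le_rfl, hmM⟩
    · push_neg at h
      simp only [if_neg (not_le.mpr h)]
      exact ⟨hql _ (lt_min h one_pos) (min_le_right _ _),
        hqu _ (lt_min h one_pos) (min_le_right _ _)⟩
  have hqm_mono : Monotone qm := by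
    intro u v huv
    rw [hqm]
    by_cases hu : u ≤ 0
    · simp only [if_pos hu]
      by_cases hv : v ≤ 0
      · simp only [if_pos hv]; exact le_rfl
      · push_neg at hv
        simp only [if_neg (not_le.mpr hv)]
        exact hql _ (lt_min hv one_pos) (min_le_right _ _)
    · push_neg at hu
      have hv : 0 < v := lt_of_lt_of_le hu huv
      simp only [if_neg (not_le.mpr hu), if_neg (not_le.mpr hv)]
      have h1 : 0 < min u 1 := lt_min hu one_pos
      have h2 : 0 < min v 1 := lt_min hv one_pos
      have h3 : min v 1 ≤ Fx (qX (min v 1)) :=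
        (galois _ _ h2 (min_le_right _ _)).mp le_rfl
      exact (galois _ _ h1 (min_le_right _ _)).mpr
        (le_trans (min_le_min huv le_rfl) h3)
  have hqm_meas : Measurable qm := hqm_mono.measurable
  -- integrability
  have hqm_int : IntegrableOn qm (Set.Ioc (0:ℝ) 1) volume := by
    refine Integrable.mono' (g := fun _ => |m| + |M|)
      ((integrableOn_const_iff).mpr (Or.inr (by rw [Real.volume_Ioc]; exact ENNReal.ofReal_lt_top)))
      hqm_meas.aestronglyMeasurable.restrict (ae_of_all _ fun u => ?_)
    have h := hqm_range u
    show ‖qm u‖ ≤ |m| + |M|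
    rw [Real.norm_eq_abs, abs_le]
    constructor
    · have := neg_abs_le m; have := abs_nonneg M; linarith [h.1]
    · have := le_abs_self M; have := abs_nonneg m; linarith [h.2]
  have hq_int : IntegrableOn qX (Set.Ioc (0:ℝ) 1) volume :=
    hqm_int.congr_fun hqm_eq measurableSet_Ioc
  have hg_int : IntegrableOn (fun u => max (z - qX u) 0) (Set.Ioc (0:ℝ) 1) volume :=
    (((integrableOn_const_iff).mpr (Or.inr (by rw [Real.volume_Ioc]; exact ENNReal.ofReal_lt_top))).sub
      hq_int).pos_part
  -- value of the objective
  have hval : ∀ p ∈ Set.Icc (0:ℝ) 1, z * p - H p = ∫ u in Set.Ioc (0:ℝ) p, (z - qX u) := by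
    intro p hp
    have hHp : H p = ∫ u in Set.Ioc (0:ℝ) p, qX u := by
      rw [hH, intervalIntegral.integral_of_le hp.1]
    have hzp : z * p = ∫ _ in Set.Ioc (0:ℝ) p, z := by
      rw [setIntegral_const, Real.volume_real_Ioc_of_le hp.1, sub_zero,
        smul_eq_mul, mul_comm]
    rw [hHp, hzp, ← integral_sub
      ((integrableOn_const_iff (C := z)).mpr (Or.inr (by rw [Real.volume_Ioc]; exact ENNReal.ofReal_lt_top)))
      (hq_int.mono_set (Set.Ioc_subset_Ioc_right hp.2))]
  -- the common value
  set A := ∫ u in Set.Ioc (0:ℝ) 1, max (z - qX u) 0 with hA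
  -- upper bound
  have hub : ∀ p ∈ Set.Icc (0:ℝ) 1, z * p - H p ≤ A := by
    intro p hp
    rw [hval p hp]
    calc ∫ u in Set.Ioc (0:ℝ) p, (z - qX u)
        ≤ ∫ u in Set.Ioc (0:ℝ) p, max (z - qX u) 0 := by
          refine setIntegral_mono_on
            (((integrableOn_const_iff).mpr (Or.inr (by rw [Real.volume_Ioc]; exact ENNReal.ofReal_lt_top))).sub
              (hq_int.mono_set (Set.Ioc_subset_Ioc_right hp.2)))
            (hg_int.mono_set (Set.Ioc_subset_Ioc_right hp.2)) measurableSet_Ioc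
            fun u _ => le_max_left _ _
      _ ≤ A := by
          refine setIntegral_mono_set hg_int (ae_of_all _ fun u => le_max_right _ _)
            (HasSubset.Subset.eventuallyLE (Set.Ioc_subset_Ioc_right hp.2))
  -- attainment : A is in the image
  have hmem : A ∈ (fun p => z * p - H p) '' Set.Icc (0:ℝ) 1 := by
    rcases lt_or_ge z m with hz | hz
    · refine ⟨0, ⟨le_rfl, zero_le_one⟩, ?_⟩
      show z * 0 - H 0 = A
      have hH0 : H 0 = 0 := by rw [hH, intervalIntegral.integral_same]
      have hA0 : A = 0 := by
        rw [hA]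
        rw [setIntegral_congr_fun measurableSet_Ioc
          (g := fun _ => (0:ℝ)) fun u hu => ?_]
        · exact integral_zero _ _
        · exact max_eq_right (by linarith [hql u hu.1 hu.2])
      rw [hA0, hH0]; ring
    · refine ⟨Fx z, ⟨hFnn z, hFle1 z⟩, ?_⟩
      show z * Fx z - H (Fx z) = A
      rw [hval (Fx z) ⟨hFnn z, hFle1 z⟩]
      have hsplit : Set.Ioc (0:ℝ) 1 = Set.Ioc 0 (Fx z) ∪ Set.Ioc (Fx z) 1 :=
        (Set.Ioc_union_Ioc_eq_Ioc (hFnn z) (hFle1 z)).symm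
      have h2 : ∫ u in Set.Ioc (Fx z) 1, max (z - qX u) 0 = 0 := by
        rw [setIntegral_congr_fun measurableSet_Ioc (g := fun _ => (0:ℝ)) fun u hu => ?_]
        · exact integral_zero _ _
        · refine max_eq_right ?_
          have hu0 : 0 < u := lt_of_le_of_lt (hFnn z) hu.1
          have : ¬ qX u ≤ z := fun hc => absurd ((galois u z hu0 hu.2).mp hc) (not_le.mpr hu.1)
          push_neg at this
          linarith
      have h1 : ∫ u in Set.Ioc (0:ℝ) (Fx z), max (z - qX u) 0
          = ∫ u in Set.Ioc (0:ℝ) (Fx z), (z - qX u) := by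
        refine setIntegral_congr_fun measurableSet_Ioc fun u hu => ?_
        refine max_eq_left ?_
        have : qX u ≤ z := (galois u z hu.1 (hu.2.trans (hFle1 z))).mpr hu.2
        linarith
      rw [hA, hsplit, setIntegral_union (Set.Ioc_disjoint_Ioc_of_le le_rfl) measurableSet_Ioc
        (hg_int.mono_set (hsplit ▸ Set.subset_union_left))
        (hg_int.mono_set (hsplit ▸ Set.subset_union_right)), h1, h2, add_zero]
  -- left side equals A
  have hLHS : ∫ x in m..z, Fx x = A := by
    rcases lt_or_ge z m with hz | hz
    · have hA0 : A = 0 := by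
        rw [hA]
        rw [setIntegral_congr_fun measurableSet_Ioc
          (g := fun _ => (0:ℝ)) fun u hu => max_eq_right (by linarith [hql u hu.1 hu.2])]
        exact integral_zero _ _
      rw [hA0, intervalIntegral.integral_symm, intervalIntegral.integral_of_le hz.le,
        MeasureTheory.integral_Ioc_eq_integral_Ioo,
        setIntegral_congr_fun measurableSet_Ioo (g := fun _ => (0:ℝ)) fun x hx => hF0 x hx.2]
      simp
    · -- Fubini
      set F2 : ℝ × ℝ → ℝ := Set.indicator {p : ℝ × ℝ | qm p.2 ≤ p.1} (fun _ => (1:ℝ)) with hF2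
      have hset : MeasurableSet {p : ℝ × ℝ | qm p.2 ≤ p.1} :=
        measurableSet_le (hqm_meas.comp measurable_snd) measurable_fst
      have hint : Integrable (Function.uncurry fun x u => F2 (x, u))
          ((volume.restrict (Set.Ioc m z)).prod (volume.restrict (Set.Ioc (0:ℝ) 1))) := by
        have huncurry : (Function.uncurry fun x u => F2 (x, u)) = F2 := rfl
        rw [huncurry]
        refine Integrable.mono' (integrable_const 1)
          ((measurable_const.indicator hset).aestronglyMeasurable) (ae_of_all _ fun p => ?_)
        rw [hF2, Real.norm_eq_abs]
        by_cases h : p ∈ {p : ℝ × ℝ | qm p.2 ≤ p.1}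
        · rw [Set.indicator_of_mem h]; simp
        · rw [Set.indicator_of_notMem h]; simp
      have hswap := MeasureTheory.integral_integral_swap hint
      have hinner1 : ∀ x : ℝ, (∫ u in Set.Ioc (0:ℝ) 1, F2 (x, u)) = Fx x := by
        intro x
        have heq : ∀ u : ℝ, F2 (x, u) = Set.indicator {u : ℝ | qm u ≤ x} (fun _ => (1:ℝ)) u := by
          intro u
          rw [hF2]
          by_cases h : qm u ≤ x
          · rw [Set.indicator_of_mem (by exact h), Set.indicator_of_mem (by exact h)]
          · rw [Set.indicator_of_notMem (by exact h), Set.indicator_of_notMem (by exact h)]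
        simp_rw [heq]
        rw [setIntegral_indicator (measurableSet_le hqm_meas measurable_const),
          setIntegral_const, smul_eq_mul, mul_one]
        have hseteq : Set.Ioc (0:ℝ) 1 ∩ {u : ℝ | qm u ≤ x} = Set.Ioc 0 (Fx x) := by
          ext u
          simp only [Set.mem_inter_iff, Set.mem_Ioc, Set.mem_setOf_eq]
          constructor
          · rintro ⟨⟨hu0, hu1⟩, hq⟩
            rw [hqm_eq u ⟨hu0, hu1⟩] at hq
            exact ⟨hu0, (galois u x hu0 hu1).mp hq⟩
          · rintro ⟨hu0, hu⟩
            have hu1 : u ≤ 1 := hu.trans (hFle1 x)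
            refine ⟨⟨hu0, hu1⟩, ?_⟩
            rw [hqm_eq u ⟨hu0, hu1⟩]
            exact (galois u x hu0 hu1).mpr hu
        rw [hseteq, Real.volume_real_Ioc_of_le (hFnn x), sub_zero]
      have hinner2 : ∀ u ∈ Set.Ioc (0:ℝ) 1,
          (∫ x in Set.Ioc m z, F2 (x, u)) = max (z - qX u) 0 := by
        intro u hu
        have heq : ∀ x : ℝ, F2 (x, u) = Set.indicator (Set.Ici (qm u)) (fun _ => (1:ℝ)) x := by
          intro x
          rw [hF2]
          by_cases h : qm u ≤ x
          · rw [Set.indicator_of_mem (by exact h), Set.indicator_of_mem (by exact h)]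
          · rw [Set.indicator_of_notMem (by exact h), Set.indicator_of_notMem (by exact h)]
        simp_rw [heq]
        rw [setIntegral_indicator measurableSet_Ici, setIntegral_const, smul_eq_mul, mul_one]
        have hc : m ≤ qm u := (hqm_range u).1
        have hvol : volume (Set.Ioc m z ∩ Set.Ici (qm u)) = ENNReal.ofReal (z - qm u) := by
          refine le_antisymm ?_ ?_
          · calc volume (Set.Ioc m z ∩ Set.Ici (qm u)) ≤ volume (Set.Icc (qm u) z) := by
                  refine measure_mono fun x hx => ⟨hx.2, hx.1.2⟩
            _ = ENNReal.ofReal (z - qm u) := Real.volume_Icc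
          · calc ENNReal.ofReal (z - qm u) = volume (Set.Ioc (qm u) z) := Real.volume_Ioc.symm
            _ ≤ volume (Set.Ioc m z ∩ Set.Ici (qm u)) := by
                  refine measure_mono fun x hx => ⟨⟨lt_of_le_of_lt hc hx.1, hx.2⟩, hx.1.le⟩
        rw [measureReal_def, hvol, ENNReal.toReal_ofReal', hqm_eq u hu]
      rw [intervalIntegral.integral_of_le hz, hA]
      calc ∫ x in Set.Ioc m z, Fx x
          = ∫ x in Set.Ioc m z, ∫ u in Set.Ioc (0:ℝ) 1, F2 (x, u) := by
            exact (setIntegral_congr_fun measurableSet_Ioc fun x _ => (hinner1 x).symm)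
        _ = ∫ u in Set.Ioc (0:ℝ) 1, ∫ x in Set.Ioc m z, F2 (x, u) := hswap
        _ = ∫ u in Set.Ioc (0:ℝ) 1, max (z - qX u) 0 :=
            setIntegral_congr_fun measurableSet_Ioc fun u hu => hinner2 u hu
  rw [hLHS]
  exact (IsGreatest.csSup_eq ⟨hmem, fun y hy => by
    obtain ⟨p, hp, rfl⟩ := hy
    exact hub p hp⟩).symm
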